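/- Let S be a countable ℵ₀-categorical semigroup, X a finite tuple of elements of S, and ρ an X-relatively automorphism preserved congruence on S. Then the quotient semigroup S/ρ is ℵ₀-categorical. -/

import Mathlib

/-- An automorphism of `S` preserving a congruence `ρ` induces an automorphism of `S/ρ`. -/
def Con.autMap {S : Type*} [Semigroup S] (ρ : Con S) (ψ : S ≃* S)
    (h : ∀ a b : S, ρ a b ↔ ρ (ψ a) (ψ b)) : ρ.Quotient ≃* ρ.Quotient where
  toFun := Quotient.map' ψ fun a b hab => (h a b).mp hab
  invFun := Quotient.map' ψ.symm fun a b hab => by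
    have := (h (ψ.symm a) (ψ.symm b)).mpr (by simpa using hab)
    exact this
  left_inv x := Quotient.inductionOn' x fun s => by
    simp [Quotient.map'_mk'']
    rfl
  right_inv x := Quotient.inductionOn' x fun s => by
    simp [Quotient.map'_mk'']
    rfl
  map_mul' x y := Quotient.inductionOn₂' x y fun s u => by
    show (Quotient.mk'' (ψ (s * u)) : ρ.Quotient) = Quotient.mk'' (ψ s * ψ u)
    rw [map_mul]

theorem Con.autMap_coe {S : Type*} [Semigroup S] (ρ : Con S) (ψ : S ≃* S)
    (h : ∀ a b : S, ρ a b ↔ ρ (ψ a) (ψ b)) (s : S) :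
    ρ.autMap ψ h (s : ρ.Quotient) = (ψ s : ρ.Quotient) := rfl



/-- Two `n`-tuples of a semigroup are automorphically equivalent if some semigroup
automorphism maps one to the other componentwise. -/
def AutRel (S : Type*) [Semigroup S] {n : ℕ} (a b : Fin n → S) : Prop :=
  ∃ φ : S ≃* S, ∀ k, φ (a k) = b k

/-- A semigroup is ℵ₀-categorical if, for every `n ≥ 1`, the action of its automorphism
group on `n`-tuples has only finitely many orbits. -/
def Aleph0Categorical (S : Type*) [Semigroup S] : Prop :=
  ∀ n : ℕ, 1 ≤ n → ∃ t : Set (Fin n → S), t.Finite ∧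
    ∀ a : Fin n → S, ∃ b ∈ t, AutRel S b a

/-- A congruence `c` on `S` is `X`-relatively automorphism preserved if every automorphism
of `S` fixing each entry of the tuple `X` preserves `c`. -/
def IsRAP {S : Type*} [Semigroup S] {t : ℕ} (X : Fin t → S) (c : Con S) : Prop :=
  ∀ φ : S ≃* S, (∀ i, φ (X i) = X i) → ∀ a b : S, c a b ↔ c (φ a) (φ b)

/-- Let `S` be a countable ℵ₀-categorical semigroup, `X` a finite tuple of elements of `S`
and `ρ` an `X`-relatively automorphism preserved congruence on `S`.  Then the quotient
semigroup `S/ρ` is ℵ₀-categorical. -/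
theorem aleph0Categorical_quotient_rap (S : Type*) [Semigroup S] [Countable S]
    (hcat : Aleph0Categorical S) {t : ℕ} (X : Fin t → S) (ρ : Con S)
    (hrap : IsRAP X ρ) :
    Aleph0Categorical ρ.Quotient := by
  intro n hn
  obtain ⟨T, hTfin, hTcov⟩ := hcat (n + t) (by omega)
  -- P b : some n-tuple a with (a ++ X) in the orbit of b
  set P : (Fin (n + t) → S) → Prop :=
    fun b => ∃ a : Fin n → S, AutRel S b (Fin.append a X) with hP
  refine ⟨⋃ b ∈ T, {c | ∃ h : P b, c = fun j => ((Classical.choose h j : S) : ρ.Quotient)},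
    hTfin.biUnion fun b _ => ?_, ?_⟩
  · apply Set.Subsingleton.finite
    rintro x ⟨h1, rfl⟩ y ⟨h2, rfl⟩
    rfl
  · intro abar
    set a : Fin n → S := fun k => (abar k).out with ha
    have haq : ∀ k, ((a k : S) : ρ.Quotient) = abar k := fun k => Quotient.out_eq _
    obtain ⟨b, hbT, φ, hφ⟩ := hTcov (Fin.append a X)
    have hPb : P b := ⟨a, φ, hφ⟩
    obtain ⟨φ₀, hφ₀⟩ := Classical.choose_spec hPb
    set a₀ : Fin n → S := Classical.choose hPb with ha₀
    -- ψ maps append a₀ X to append a X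
    set ψ : S ≃* S := φ₀.symm.trans φ with hψ
    have hψapp : ∀ k, ψ (Fin.append a₀ X k) = Fin.append a X k := by
      intro k
      have : φ₀.symm (Fin.append a₀ X k) = b k := by
        rw [← hφ₀ k]; exact φ₀.symm_apply_apply _
      simp only [hψ, MulEquiv.trans_apply, this, hφ k]
    have hfix : ∀ i, ψ (X i) = X i := by
      intro i
      have h1 := hψapp (Fin.natAdd n i)
      rwa [Fin.append_right, Fin.append_right] at h1
    have hpres := hrap ψ hfix
    refine ⟨fun j => ((a₀ j : S) : ρ.Quotient), Set.mem_biUnion hbT ⟨hPb, rfl⟩,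
      ρ.autMap ψ hpres, fun k => ?_⟩
    have h2 := hψapp (Fin.castAdd t k)
    rw [Fin.append_left, Fin.append_left] at h2
    rw [Con.autMap_coe, h2, haq]
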